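/- Let R be a discrete valuation ring with fraction field F and uniformizer π (a generator of the maximal ideal). Let A = { x ∈ Mat₂(R) : the (1,2) entry of x lies in πR }, an R-order in Mat₂(F), and let u = [[0, π], [1, 0]] ∈ Mat₂(F). Then the map x ↦ u x u⁻¹, computed in Mat₂(F), maps A bijectively onto A and is an R-algebra automorphism of A; however, it is not an inner automorphism of A: there is no unit v of A such that u x u⁻¹ = v x v⁻¹ for all x ∈ A. -/

import Mathlib

open Matrix

/-- The `R`-order `A = { x ∈ Mat₂(R) : x₀₁ ∈ I }` inside `Mat₂(R)`, for an ideal `I` of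
`R`; for `I = πR` this is the hereditary order of the statement. -/
def matOrder (R : Type*) [CommRing R] (I : Ideal R) :
    Subalgebra R (Matrix (Fin 2) (Fin 2) R) where
  carrier := {x | x 0 1 ∈ I}
  mul_mem' := by
    intro x y hx hy
    simp only [Set.mem_setOf_eq] at *
    rw [Matrix.mul_apply, Fin.sum_univ_two]
    exact I.add_mem (I.mul_mem_left _ hy) (I.mul_mem_right _ hx)
  add_mem' := by
    intro x y hx hy
    simpa [Matrix.add_apply] using I.add_mem hx hy
  one_mem' := by
    simp only [Set.mem_setOf_eq, Matrix.one_apply_ne (by decide : (0 : Fin 2) ≠ 1)]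
    exact I.zero_mem
  zero_mem' := by
    simp only [Set.mem_setOf_eq, Matrix.zero_apply]
    exact I.zero_mem
  algebraMap_mem' := by
    intro r
    simp only [Set.mem_setOf_eq, Matrix.algebraMap_matrix_apply,
      if_neg (by decide : ¬(0 : Fin 2) = 1)]
    exact I.zero_mem

set_option linter.unusedSectionVars false

section Aux

variable {R : Type*} [CommRing R] [IsDomain R] (π : R)

noncomputable def pdiv (b : R) (hb : b ∈ Ideal.span {π}) : R :=
  (Ideal.mem_span_singleton'.mp hb).choose

lemma pdiv_spec (b : R) (hb : b ∈ Ideal.span {π}) : pdiv π b hb * π = b :=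
  (Ideal.mem_span_singleton'.mp hb).choose_spec

lemma pdiv_eq (hπ0 : π ≠ 0) {b : R} {hb : b ∈ Ideal.span {π}} {r : R}
    (h : r * π = b) : pdiv π b hb = r :=
  mul_right_cancel₀ hπ0 (by rw [pdiv_spec, h])

lemma mem_matOrder {I : Ideal R} {x : Matrix (Fin 2) (Fin 2) R} :
    x ∈ matOrder R I ↔ x 0 1 ∈ I := Iff.rfl

noncomputable def conjFun (x : matOrder R (Ideal.span {π})) :
    Matrix (Fin 2) (Fin 2) R :=
  !![x.1 1 1, π * x.1 1 0; pdiv π (x.1 0 1) x.2, x.1 0 0]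

lemma conjFun_mem (x : matOrder R (Ideal.span {π})) :
    conjFun π x ∈ matOrder R (Ideal.span {π}) := by
  rw [mem_matOrder]
  show π * x.1 1 0 ∈ _
  exact Ideal.mem_span_singleton'.mpr ⟨x.1 1 0, mul_comm _ _⟩

noncomputable def conjEquiv (hπ0 : π ≠ 0) :
    matOrder R (Ideal.span {π}) ≃ₐ[R] matOrder R (Ideal.span {π}) where
  toFun x := ⟨conjFun π x, conjFun_mem π x⟩
  invFun x := ⟨conjFun π x, conjFun_mem π x⟩
  left_inv x := by
    apply Subtype.ext
    ext i j
    fin_cases i <;> fin_cases j <;> simp [conjFun]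
    · rw [mul_comm]; exact pdiv_spec π _ _
    · exact pdiv_eq π hπ0 (mul_comm _ _)
  right_inv x := by
    apply Subtype.ext
    ext i j
    fin_cases i <;> fin_cases j <;> simp [conjFun]
    · rw [mul_comm]; exact pdiv_spec π _ _
    · exact pdiv_eq π hπ0 (mul_comm _ _)
  map_mul' x y := by
    apply Subtype.ext
    show conjFun π (x * y) = conjFun π x * conjFun π y
    have hx := pdiv_spec π (x.1 0 1) x.2
    have hy := pdiv_spec π (y.1 0 1) y.2
    have hxy : ((x * y : matOrder R (Ideal.span {π})) : Matrix (Fin 2) (Fin 2) R)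
        = (x : Matrix (Fin 2) (Fin 2) R) * y := rfl
    ext i j
    fin_cases i <;> fin_cases j <;>
      simp [conjFun, hxy, Matrix.mul_apply, Fin.sum_univ_two]
    · linear_combination -x.1 1 0 * hy
    · ring
    · apply pdiv_eq π hπ0
      linear_combination y.1 1 1 * hx + x.1 0 0 * hy
    · linear_combination -y.1 1 0 * hx
  map_add' x y := by
    apply Subtype.ext
    show conjFun π (x + y) = conjFun π x + conjFun π y
    have hx := pdiv_spec π (x.1 0 1) x.2
    have hy := pdiv_spec π (y.1 0 1) y.2
    have hxy : ((x + y : matOrder R (Ideal.span {π})) : Matrix (Fin 2) (Fin 2) R)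
        = (x : Matrix (Fin 2) (Fin 2) R) + y := rfl
    ext i j
    fin_cases i <;> fin_cases j <;> simp [conjFun, hxy]
    · ring
    · apply pdiv_eq π hπ0
      linear_combination hx + hy
  commutes' r := by
    apply Subtype.ext
    show conjFun π (algebraMap R (matOrder R (Ideal.span {π})) r)
        = (algebraMap R (matOrder R (Ideal.span {π})) r : Matrix (Fin 2) (Fin 2) R)
    have hr : ((algebraMap R (matOrder R (Ideal.span {π})) r : matOrder R (Ideal.span {π}))
        : Matrix (Fin 2) (Fin 2) R) = algebraMap R (Matrix (Fin 2) (Fin 2) R) r := rfl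
    ext i j
    fin_cases i <;> fin_cases j <;>
      simp [conjFun, hr, Matrix.algebraMap_matrix_apply]
    apply pdiv_eq π hπ0
    simp

end Aux

/-- Let `R` be a discrete valuation ring with fraction field `F` and
uniformizer `π`, let `A = { x ∈ Mat₂(R) : x₀₁ ∈ πR }` and `u = [[0, π], [1, 0]] ∈ Mat₂(F)`.
Then `u` is invertible and the map `x ↦ u x u⁻¹`, computed in `Mat₂(F)`, restricts to an
`R`-algebra automorphism `ψ` of `A` (in particular it maps `A` bijectively onto `A`);
however `ψ` is not inner: there is no unit `v` of `A` with `ψ x = v x v⁻¹` for all `x`. -/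
theorem conjugation_automorphism_not_inner
    (R F : Type*) [CommRing R] [IsDomain R] [IsDiscreteValuationRing R]
    [Field F] [Algebra R F] [IsFractionRing R F]
    (π : R) (hπ : Ideal.span {π} = IsLocalRing.maximalIdeal R) :
    IsUnit (!![0, algebraMap R F π; 1, 0]) ∧
    ∃ ψ : matOrder R (Ideal.span {π}) ≃ₐ[R] matOrder R (Ideal.span {π}),
      (∀ x : matOrder R (Ideal.span {π}),
        (algebraMap R F).mapMatrix ((ψ x : Matrix (Fin 2) (Fin 2) R))
          = !![0, algebraMap R F π; 1, 0]
            * (algebraMap R F).mapMatrix ((x : Matrix (Fin 2) (Fin 2) R))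
            * (!![0, algebraMap R F π; 1, 0])⁻¹) ∧
      ¬ ∃ v : (matOrder R (Ideal.span {π}))ˣ,
          ∀ x : matOrder R (Ideal.span {π}), ψ x = v * x * ↑v⁻¹ := by
  
  have hπ0 : π ≠ 0 := by
    intro h
    exact IsDiscreteValuationRing.not_a_field R
      (by rw [← hπ, h, Ideal.span_singleton_eq_bot.mpr rfl])
  have hπ'0 : algebraMap R F π ≠ 0 := fun h =>
    hπ0 ((IsFractionRing.to_map_eq_zero_iff (K := F)).mp h)
  have hdet : IsUnit (!![0, algebraMap R F π; 1, 0]).det := by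
    rw [Matrix.det_fin_two_of]
    simpa using hπ'0
  have hu : IsUnit (!![0, algebraMap R F π; 1, 0]) :=
    (Matrix.isUnit_iff_isUnit_det _).mpr hdet
  refine ⟨hu, conjEquiv π hπ0, ?_, ?_⟩
  · intro x
    have key : (algebraMap R F).mapMatrix ((conjEquiv π hπ0 x : Matrix (Fin 2) (Fin 2) R))
        * !![0, algebraMap R F π; 1, 0]
        = !![0, algebraMap R F π; 1, 0]
          * (algebraMap R F).mapMatrix ((x : Matrix (Fin 2) (Fin 2) R)) := by
      have hcoe : ((conjEquiv π hπ0 x : matOrder R (Ideal.span {π}))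
          : Matrix (Fin 2) (Fin 2) R) = conjFun π x := rfl
      have hpd := pdiv_spec π (x.1 0 1) x.2
      ext i j
      fin_cases i <;> fin_cases j <;>
        simp [hcoe, conjFun, Matrix.mul_apply, Fin.sum_univ_two, mul_comm]
      rw [← _root_.map_mul, mul_comm, hpd]
    rw [← key, Matrix.mul_assoc, Matrix.mul_nonsing_inv _ hdet, Matrix.mul_one]
  · rintro ⟨v, hv⟩
    set M : Matrix (Fin 2) (Fin 2) R :=
      ((v : matOrder R (Ideal.span {π})) : Matrix (Fin 2) (Fin 2) R) with hM
    set W : Matrix (Fin 2) (Fin 2) R :=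
      ((↑v⁻¹ : matOrder R (Ideal.span {π})) : Matrix (Fin 2) (Fin 2) R) with hW
    have hvw : M * W = 1 := by
      have h : ((v : matOrder R (Ideal.span {π})) * ↑v⁻¹ : matOrder R (Ideal.span {π}))
          = 1 := v.mul_inv
      exact congrArg Subtype.val h
    -- test element e1 = E₁₁
    set e1 : matOrder R (Ideal.span {π}) :=
      ⟨!![1, 0; 0, 0], by rw [mem_matOrder]; simp⟩ with he1
    set e2 : matOrder R (Ideal.span {π}) :=
      ⟨!![0, 0; 1, 0], by rw [mem_matOrder]; simp⟩ with he2
    have cancel : ∀ x : matOrder R (Ideal.span {π}),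
        (conjEquiv π hπ0 x : matOrder R (Ideal.span {π})) * ↑v = ↑v * x := by
      intro x
      rw [hv x, mul_assoc, mul_assoc, Units.inv_mul, mul_one]
    have h1 := congrArg (fun m : matOrder R (Ideal.span {π})
      => (m : Matrix (Fin 2) (Fin 2) R) 0 0) (cancel e1)
    have h2 := congrArg (fun m : matOrder R (Ideal.span {π})
      => (m : Matrix (Fin 2) (Fin 2) R) 0 0) (cancel e2)
    have hcoe1 : ((conjEquiv π hπ0 e1 : matOrder R (Ideal.span {π}))
        : Matrix (Fin 2) (Fin 2) R) = conjFun π e1 := rfl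
    have hcoe2 : ((conjEquiv π hπ0 e2 : matOrder R (Ideal.span {π}))
        : Matrix (Fin 2) (Fin 2) R) = conjFun π e2 := rfl
    simp only [MulMemClass.coe_mul, hcoe1, hcoe2, ← hM] at h1 h2
    have hp1 : pdiv π ((e1 : Matrix (Fin 2) (Fin 2) R) 0 1) e1.2 = 0 :=
      pdiv_eq π hπ0 (by simp [he1])
    have hp2 : pdiv π ((e2 : Matrix (Fin 2) (Fin 2) R) 0 1) e2.2 = 0 :=
      pdiv_eq π hπ0 (by simp [he2])
    rw [Matrix.mul_apply, Fin.sum_univ_two, Matrix.mul_apply, Fin.sum_univ_two] at h1 h2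
    simp [conjFun, he1] at h1
    simp [conjFun, he2] at h2
    -- h1 : 0 = M 0 0 (or similar), h2 : π * M 1 0 = M 0 1
    have h3 := congrFun (congrFun hvw 0) 0
    rw [Matrix.mul_apply, Fin.sum_univ_two] at h3
    simp at h3
    have hunit : IsUnit π := by
      refine IsUnit.of_mul_eq_one (a := π) (M 1 0 * W 1 0) ?_
      linear_combination h3 + W 0 0 * h1 + W 1 0 * h2
    have hmem : π ∈ IsLocalRing.maximalIdeal R := hπ ▸ Ideal.mem_span_singleton_self π
    exact mem_nonunits_iff.mp ((IsLocalRing.mem_maximalIdeal π).mp hmem) hunit
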